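/- Let p ≥ 3 be prime and a ∈ ℚ_p with |a|_p > 1 and b ∈ ℚ_p with b² = 1 - a. Set x₁ = 1/b, x₂ = -1/b, and r = |x₁|_p/p. Then for every nonzero x ∈ ℚ_p with |x - x₁|_p > r and |x - x₂|_p > r, we have |a·x + 1/x|_p > 1. -/

import Mathlib

theorem stmt13 (p : ℕ) [Fact p.Prime] (hp : 3 ≤ p) (a b : ℚ_[p]) (ha : 1 < ‖a‖)
    (hb : b ^ 2 = 1 - a)
    (x : ℚ_[p]) (hx : x ≠ 0)
    (h1 : ‖(1 / b : ℚ_[p])‖ / p < ‖x - 1 / b‖)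
    (h2 : ‖(1 / b : ℚ_[p])‖ / p < ‖x - (-(1 / b))‖) :
    1 < ‖a * x + 1 / x‖ := by
  have hp1 : (1:ℝ) < p := by exact_mod_cast (Fact.out : p.Prime).one_lt
  have ha0 : a ≠ 0 := by intro h; rw [h] at ha; simp at ha; linarith
  have hb0 : b ≠ 0 := by
    intro h; rw [h] at hb; simp at hb
    have : a = 1 := by linear_combination hb
    rw [this] at ha; simp at ha
  have hna : ‖(1:ℚ_[p]) - a‖ = ‖a‖ := by
    rw [sub_eq_add_neg, Padic.add_eq_max_of_ne (by simp; linarith)]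
    simp [le_of_lt ha]
  have hnb2 : ‖b‖^2 = ‖a‖ := by rw [← norm_pow, hb, hna]
  have hbn : 1 < ‖b‖ := by nlinarith [norm_nonneg b]
  have hbpos : (0:ℝ) < ‖b‖ := by linarith
  have hR : ‖(1/b : ℚ_[p])‖ = ‖b‖⁻¹ := by rw [one_div, norm_inv]
  have hRpos : (0:ℝ) < ‖b‖⁻¹ := by positivity
  have hRlt1 : ‖b‖⁻¹ < 1 := by
    rw [inv_lt_one_iff₀]; right; exact hbn
  -- discreteness
  have disc : ∀ y z : ℚ_[p], z ≠ 0 → ‖z‖/p < ‖y‖ → ‖z‖ ≤ ‖y‖ := by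
    intro y z hz h
    rw [Padic.norm_eq_zpow_neg_valuation hz] at h ⊢
    by_contra hle
    push_neg at hle
    have h' := (Padic.norm_le_pow_iff_norm_lt_pow_add_one y (-z.valuation - 1)).mpr
      (by rwa [sub_add_cancel])
    have hdiv : (p:ℝ)^(-z.valuation) / p = (p:ℝ)^(-z.valuation - 1) := by
      rw [zpow_sub₀ (by positivity), zpow_one]
    rw [hdiv] at h
    linarith
  have hb1 : (1/b : ℚ_[p]) ≠ 0 := one_div_ne_zero hb0
  rcases lt_trichotomy ‖x‖ ‖b‖⁻¹ with hlt | heq | hgt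
  · -- ‖x‖ small: 1/x dominates
    have hax : ‖a * x‖ < ‖b‖ := by
      rw [norm_mul, ← hnb2]
      calc ‖b‖^2 * ‖x‖ < ‖b‖^2 * ‖b‖⁻¹ := by
            apply mul_lt_mul_of_pos_left hlt (by positivity)
        _ = ‖b‖ := by field_simp
    have hix : ‖b‖ < ‖(1/x : ℚ_[p])‖ := by
      rw [one_div, norm_inv]
      rw [← inv_inv ‖b‖]
      exact inv_strictAnti₀ (norm_pos_iff.mpr hx) hlt
    rw [Padic.add_eq_max_of_ne (ne_of_lt (lt_trans hax hix)),
      max_eq_right (le_of_lt (lt_trans hax hix))]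
    linarith
  · -- ‖x‖ = ‖b‖⁻¹ : the middle case
    have e1 : ‖x - 1/b‖ = ‖b‖⁻¹ := by
      apply le_antisymm
      · have h := Padic.nonarchimedean x (-(1/b))
        rw [← sub_eq_add_neg, norm_neg] at h
        calc ‖x - 1/b‖ ≤ max ‖x‖ ‖(1/b:ℚ_[p])‖ := h
          _ = ‖b‖⁻¹ := by rw [heq, hR, max_self]
      · have := disc _ _ hb1 h1
        rwa [hR] at this
    have e2 : ‖x + 1/b‖ = ‖b‖⁻¹ := by
      apply le_antisymm
      · have h := Padic.nonarchimedean x (1/b)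
        calc ‖x + 1/b‖ ≤ max ‖x‖ ‖(1/b:ℚ_[p])‖ := h
          _ = ‖b‖⁻¹ := by rw [heq, hR, max_self]
      · have := disc _ _ hb1 h2
        rwa [hR, sub_neg_eq_add] at this
    have key : a * x + 1 / x = ((1 - b*x)*(1 + b*x) + x^2) / x := by
      field_simp
      linear_combination x^2 * hb
    have n1 : ‖(1:ℚ_[p]) - b*x‖ = 1 := by
      have : (1:ℚ_[p]) - b*x = b * (1/b - x) := by field_simp
      rw [this, norm_mul, norm_sub_rev, e1]
      field_simp
    have n2 : ‖(1:ℚ_[p]) + b*x‖ = 1 := by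
      have : (1:ℚ_[p]) + b*x = b * (1/b + x) := by field_simp
      rw [this, norm_mul, add_comm (1/b) x, e2]
      field_simp
    have nprod : ‖((1:ℚ_[p]) - b*x)*(1 + b*x)‖ = 1 := by rw [norm_mul, n1, n2, one_mul]
    have nx2 : ‖x^2‖ < 1 := by
      rw [norm_pow, heq]
      nlinarith
    have nnum : ‖((1:ℚ_[p]) - b*x)*(1 + b*x) + x^2‖ = 1 := by
      rw [Padic.add_eq_max_of_ne (by rw [nprod]; exact ne_of_gt nx2), nprod]
      exact max_eq_left (le_of_lt nx2)
    rw [key, norm_div, nnum, heq]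
    rw [one_div, inv_inv]
    exact hbn
  · -- ‖x‖ large: a*x dominates
    have hax : ‖b‖ < ‖a * x‖ := by
      rw [norm_mul, ← hnb2]
      calc ‖b‖ = ‖b‖^2 * ‖b‖⁻¹ := by field_simp
        _ < ‖b‖^2 * ‖x‖ := by apply mul_lt_mul_of_pos_left hgt (by positivity)
    have hix : ‖(1/x : ℚ_[p])‖ < ‖b‖ := by
      rw [one_div, norm_inv, ← inv_inv ‖b‖]
      exact inv_strictAnti₀ hRpos hgt
    rw [Padic.add_eq_max_of_ne (ne_of_gt (lt_trans hix hax)),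
      max_eq_left (le_of_lt (lt_trans hix hax))]
    linarith
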